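/- Let w : [0,∞) → [0,1) be any strictly increasing function and define w̃ : ℝ → (0,1) by w̃(x) = (1 + w(x))/2 for x > 0, w̃(0) = 1/2, and w̃(x) = (1 − w(−x))/2 for x < 0. Then for all strictly increasing functions f₁, f₂ : ℝ → ℝ and all reals x₁ > x₂, (1/2)·w̃(f₁(x₁) − f₂(x₂)) + (1/2)·w̃(f₂(x₁) − f₁(x₂)) > 1/2. Consequently, the randomized canonical estimator—which, given the two reported scores y₁, y₂ under a uniformly random assignment of the two reviewers to the two items, declares item 1 larger with probability w̃(y₁ − y₂) and item 2 larger otherwise—has probability of correctly identifying the larger item strictly greater than 1/2, uniformly over all item values and all strictly increasing calibration functions; i.e., it strictly uniformly dominates the random-guessing estimator. -/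
import Mathlib


/- STATEMENT 1: Let `w : [0,∞) → [0,1)` be strictly increasing and let `w̃` be the induced
acceptance-probability function. Then for all strictly increasing calibration functions
`f₁, f₂` and all item values `x₁ > x₂`, the success probability of the randomized canonical
estimator, namely `(1/2)·w̃(f₁(x₁) − f₂(x₂)) + (1/2)·w̃(f₂(x₁) − f₁(x₂))`, is strictly
greater than 1/2; i.e., it strictly uniformly dominates random guessing. -/
theorem canonical_estimator_dominates_random_guessing
    (w : ℝ → ℝ)
    (hw01 : ∀ x : ℝ, 0 ≤ x → w x ∈ Set.Ico (0 : ℝ) 1)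
    (hwmono : ∀ x y : ℝ, 0 ≤ x → x < y → w x < w y)
    (wt : ℝ → ℝ)
    (hwt : ∀ x : ℝ, wt x =
      if 0 < x then (1 + w x) / 2 else if x = 0 then 1 / 2 else (1 - w (-x)) / 2)
    (f₁ f₂ : ℝ → ℝ) (hf₁ : StrictMono f₁) (hf₂ : StrictMono f₂)
    (x₁ x₂ : ℝ) (hx : x₂ < x₁) :
    (1 / 2 : ℝ) < (1 / 2) * wt (f₁ x₁ - f₂ x₂) + (1 / 2) * wt (f₂ x₁ - f₁ x₂) := by
  set a := f₁ x₁ - f₂ x₂ with ha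
  set b := f₂ x₁ - f₁ x₂ with hb
  have hab : 0 < a + b := by
    have h1 := hf₁ hx
    have h2 := hf₂ hx
    simp only [ha, hb]; linarith
  have hw0 : 0 ≤ w 0 := (hw01 0 le_rfl).1
  -- key lemma: wt a + wt b > 1
  have key : 1 < wt a + wt b := by
    rcases lt_trichotomy 0 a with hA | hA | hA
    · rcases lt_trichotomy 0 b with hB | hB | hB
      · rw [hwt a, hwt b, if_pos hA, if_pos hB]
        have : 0 < w a := lt_of_le_of_lt hw0 (hwmono 0 a le_rfl hA)
        have : 0 < w b := lt_of_le_of_lt hw0 (hwmono 0 b le_rfl hB)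
        linarith
      · rw [hwt a, hwt b, if_pos hA, if_neg (by linarith), if_pos hB.symm]
        have : 0 < w a := lt_of_le_of_lt hw0 (hwmono 0 a le_rfl hA)
        linarith
      · rw [hwt a, hwt b, if_pos hA, if_neg (by linarith), if_neg (by linarith)]
        have hnb : 0 ≤ -b := by linarith
        have : w (-b) < w a := hwmono (-b) a hnb (by linarith)
        linarith
    · rw [hwt a, hwt b, if_neg (by linarith), if_pos hA.symm,
        if_pos (by linarith)]
      have : 0 < w b := lt_of_le_of_lt hw0 (hwmono 0 b le_rfl (by linarith))
      linarith
    · have hB : 0 < b := by linarith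
      rw [hwt a, hwt b, if_neg (by linarith), if_neg (by linarith), if_pos hB]
      have hna : 0 ≤ -a := by linarith
      have : w (-a) < w b := hwmono (-a) b hna (by linarith)
      linarith
  linarith
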